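/- In the Euler problem with Hamiltonian H(q,p) = |p|²/2 − (1−μ)/|q−E| − μ/|q−M| with E = (0,0), M = (1,0) and μ ∈ (0,1), the function B(q,p) = −(q₁p₂ − q₂p₁)² + (q₁p₂ − q₂p₁)p₂ − (1−μ)q₁/|q−E| − μ(1−q₁)/|q−M| is a first integral: its Poisson bracket with H vanishes, {H, B} = 0, on T*(ℝ²∖{E,M}). -/

import Mathlib

/-- Poisson bracket of two functions of `(q₁, q₂, p₁, p₂)` with respect to the
standard symplectic structure on `T*ℝ²`:
`{f,g} = Σᵢ (∂f/∂pᵢ · ∂g/∂qᵢ − ∂f/∂qᵢ · ∂g/∂pᵢ)`. -/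
noncomputable def poissonBracket (f g : ℝ → ℝ → ℝ → ℝ → ℝ)
    (q₁ q₂ p₁ p₂ : ℝ) : ℝ :=
  (deriv (fun x => f q₁ q₂ x p₂) p₁) * (deriv (fun x => g x q₂ p₁ p₂) q₁)
  - (deriv (fun x => f x q₂ p₁ p₂) q₁) * (deriv (fun x => g q₁ q₂ x p₂) p₁)
  + (deriv (fun x => f q₁ q₂ p₁ x) p₂) * (deriv (fun x => g q₁ x p₁ p₂) q₂)
  - (deriv (fun x => f q₁ x p₁ p₂) q₂) * (deriv (fun x => g q₁ q₂ p₁ x) p₂)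

/-- The Hamiltonian of the Euler problem of two fixed centers,
with `E = (0,0)` and `M = (1,0)`. -/
noncomputable def eulerHamiltonian (μ : ℝ) (q₁ q₂ p₁ p₂ : ℝ) : ℝ :=
  (p₁ ^ 2 + p₂ ^ 2) / 2 - (1 - μ) / Real.sqrt (q₁ ^ 2 + q₂ ^ 2)
    - μ / Real.sqrt ((q₁ - 1) ^ 2 + q₂ ^ 2)

/-- The classical first integral of the Euler problem. -/
noncomputable def eulerIntegral (μ : ℝ) (q₁ q₂ p₁ p₂ : ℝ) : ℝ :=
  -(q₁ * p₂ - q₂ * p₁) ^ 2 + (q₁ * p₂ - q₂ * p₁) * p₂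
    - (1 - μ) * q₁ / Real.sqrt (q₁ ^ 2 + q₂ ^ 2)
    - μ * (1 - q₁) / Real.sqrt ((q₁ - 1) ^ 2 + q₂ ^ 2)


open Real in
/-- derivative in the first-coordinate direction of `c / r`. -/
lemma hda_c_div_r (c a y x : ℝ) (h : (0:ℝ) < (x - a) ^ 2 + y ^ 2) :
    HasDerivAt (fun t : ℝ => c / Real.sqrt ((t - a) ^ 2 + y ^ 2))
      (-(c * (x - a)) / Real.sqrt ((x - a) ^ 2 + y ^ 2) ^ 3) x := by
  have hr : Real.sqrt ((x - a) ^ 2 + y ^ 2) ≠ 0 := by positivity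
  have hin : HasDerivAt (fun t : ℝ => (t - a) ^ 2 + y ^ 2) (2 * (x - a)) x := by
    have := (((hasDerivAt_id x).sub_const a).pow 2).add_const (y ^ 2)
    simpa [mul_comm] using this
  have hs : HasDerivAt (fun t : ℝ => Real.sqrt ((t - a) ^ 2 + y ^ 2))
      (1 / (2 * Real.sqrt ((x - a) ^ 2 + y ^ 2)) * (2 * (x - a))) x :=
    (Real.hasDerivAt_sqrt (ne_of_gt h)).comp x hin
  have := (hasDerivAt_const x c).div hs hr
  refine this.congr_deriv (Eq.symm ?_)
  set s := Real.sqrt ((x - a) ^ 2 + y ^ 2) with hsdef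
  field_simp
  ring

open Real in
/-- derivative in the first-coordinate direction of `c * (t - a) / r`. -/
lemma hda_lin_div_r (c a y x : ℝ) (h : (0:ℝ) < (x - a) ^ 2 + y ^ 2) :
    HasDerivAt (fun t : ℝ => c * (t - a) / Real.sqrt ((t - a) ^ 2 + y ^ 2))
      (c * y ^ 2 / Real.sqrt ((x - a) ^ 2 + y ^ 2) ^ 3) x := by
  have hr : Real.sqrt ((x - a) ^ 2 + y ^ 2) ≠ 0 := by positivity
  have hrsq : Real.sqrt ((x - a) ^ 2 + y ^ 2) ^ 2 = (x - a) ^ 2 + y ^ 2 :=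
    Real.sq_sqrt h.le
  have hin : HasDerivAt (fun t : ℝ => (t - a) ^ 2 + y ^ 2) (2 * (x - a)) x := by
    have := (((hasDerivAt_id x).sub_const a).pow 2).add_const (y ^ 2)
    simpa [mul_comm] using this
  have hs : HasDerivAt (fun t : ℝ => Real.sqrt ((t - a) ^ 2 + y ^ 2))
      (1 / (2 * Real.sqrt ((x - a) ^ 2 + y ^ 2)) * (2 * (x - a))) x :=
    (Real.hasDerivAt_sqrt (ne_of_gt h)).comp x hin
  have hnum : HasDerivAt (fun t : ℝ => c * (t - a)) c x := by
    simpa using (((hasDerivAt_id x).sub_const a).const_mul c)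
  have := hnum.div hs hr
  refine this.congr_deriv (Eq.symm ?_)
  set s := Real.sqrt ((x - a) ^ 2 + y ^ 2) with hsdef
  field_simp
  linear_combination (-c) * hrsq

open Real in
/-- derivative in the second-coordinate direction of `c / r`. -/
lemma hda_c_div_r_y (c b x : ℝ) (h : (0:ℝ) < b ^ 2 + x ^ 2) :
    HasDerivAt (fun t : ℝ => c / Real.sqrt (b ^ 2 + t ^ 2))
      (-(c * x) / Real.sqrt (b ^ 2 + x ^ 2) ^ 3) x := by
  have hr : Real.sqrt (b ^ 2 + x ^ 2) ≠ 0 := by positivity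
  have hin : HasDerivAt (fun t : ℝ => b ^ 2 + t ^ 2) (2 * x) x := by
    have := ((hasDerivAt_pow 2 x).const_add (b ^ 2))
    simpa [mul_comm] using this
  have hs : HasDerivAt (fun t : ℝ => Real.sqrt (b ^ 2 + t ^ 2))
      (1 / (2 * Real.sqrt (b ^ 2 + x ^ 2)) * (2 * x)) x :=
    (Real.hasDerivAt_sqrt (ne_of_gt h)).comp x hin
  have := (hasDerivAt_const x c).div hs hr
  refine this.congr_deriv (Eq.symm ?_)
  set s := Real.sqrt (b ^ 2 + x ^ 2) with hsdef
  field_simp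
  ring


theorem euler_integral_poisson_commutes (μ : ℝ) (hμ : μ ∈ Set.Ioo (0 : ℝ) 1)
    (q₁ q₂ p₁ p₂ : ℝ) (hE : (q₁, q₂) ≠ (0, 0)) (hM : (q₁, q₂) ≠ (1, 0)) :
    poissonBracket (eulerHamiltonian μ) (eulerIntegral μ) q₁ q₂ p₁ p₂ = 0 := by
  have h1 : (0:ℝ) < q₁ ^ 2 + q₂ ^ 2 := by
    have : q₁ ≠ 0 ∨ q₂ ≠ 0 := by
      by_contra hcon
      push_neg at hcon
      exact hE (by simp [hcon.1, hcon.2])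
    rcases this with h | h <;> positivity
  have h2 : (0:ℝ) < (q₁ - 1) ^ 2 + q₂ ^ 2 := by
    have : q₁ - 1 ≠ 0 ∨ q₂ ≠ 0 := by
      by_contra hcon
      push_neg at hcon
      exact hM (by simp [show q₁ = 1 by linarith [sub_eq_zero.mp hcon.1], hcon.2])
    rcases this with h | h <;> positivity
  set r₁ := Real.sqrt (q₁ ^ 2 + q₂ ^ 2) with hr₁def
  set r₂ := Real.sqrt ((q₁ - 1) ^ 2 + q₂ ^ 2) with hr₂def
  have hr₁ : r₁ ≠ 0 := by positivity
  have hr₂ : r₂ ≠ 0 := by positivity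
  -- ∂H/∂p₁
  have Hp1 : deriv (fun x => eulerHamiltonian μ q₁ q₂ x p₂) p₁ = p₁ := by
    have : HasDerivAt (fun x => eulerHamiltonian μ q₁ q₂ x p₂) p₁ p₁ := by
      unfold eulerHamiltonian
      have := ((((hasDerivAt_pow 2 p₁).add_const (p₂ ^ 2)).div_const 2).sub_const
        ((1 - μ) / r₁)).sub_const (μ / r₂)
      refine this.congr_deriv (Eq.symm ?_)
      ring
    exact this.deriv
  -- ∂H/∂p₂
  have Hp2 : deriv (fun x => eulerHamiltonian μ q₁ q₂ p₁ x) p₂ = p₂ := by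
    have : HasDerivAt (fun x => eulerHamiltonian μ q₁ q₂ p₁ x) p₂ p₂ := by
      unfold eulerHamiltonian
      have := ((((hasDerivAt_pow 2 p₂).const_add (p₁ ^ 2)).div_const 2).sub_const
        ((1 - μ) / r₁)).sub_const (μ / r₂)
      refine this.congr_deriv (Eq.symm ?_)
      ring
    exact this.deriv
  -- ∂H/∂q₁
  have Hq1 : deriv (fun x => eulerHamiltonian μ x q₂ p₁ p₂) q₁ =
      (1 - μ) * q₁ / r₁ ^ 3 + μ * (q₁ - 1) / r₂ ^ 3 := by
    have ha : HasDerivAt (fun t : ℝ => (1 - μ) / Real.sqrt (t ^ 2 + q₂ ^ 2))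
        (-((1 - μ) * q₁) / r₁ ^ 3) q₁ := by
      have := hda_c_div_r (1 - μ) 0 q₂ q₁ (by simpa using h1)
      simpa [hr₁def] using this
    have hb : HasDerivAt (fun t : ℝ => μ / Real.sqrt ((t - 1) ^ 2 + q₂ ^ 2))
        (-(μ * (q₁ - 1)) / r₂ ^ 3) q₁ := hda_c_div_r μ 1 q₂ q₁ h2
    have : HasDerivAt (fun x => eulerHamiltonian μ x q₂ p₁ p₂)
        ((1 - μ) * q₁ / r₁ ^ 3 + μ * (q₁ - 1) / r₂ ^ 3) q₁ := by
      unfold eulerHamiltonian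
      have := ((hasDerivAt_const q₁ ((p₁ ^ 2 + p₂ ^ 2) / 2)).sub ha).sub hb
      refine this.congr_deriv (Eq.symm ?_)
      ring
    exact this.deriv
  -- ∂H/∂q₂
  have Hq2 : deriv (fun x => eulerHamiltonian μ q₁ x p₁ p₂) q₂ =
      (1 - μ) * q₂ / r₁ ^ 3 + μ * q₂ / r₂ ^ 3 := by
    have ha : HasDerivAt (fun t : ℝ => (1 - μ) / Real.sqrt (q₁ ^ 2 + t ^ 2))
        (-((1 - μ) * q₂) / r₁ ^ 3) q₂ := hda_c_div_r_y (1 - μ) q₁ q₂ h1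
    have hb : HasDerivAt (fun t : ℝ => μ / Real.sqrt ((q₁ - 1) ^ 2 + t ^ 2))
        (-(μ * q₂) / r₂ ^ 3) q₂ := hda_c_div_r_y μ (q₁ - 1) q₂ h2
    have : HasDerivAt (fun x => eulerHamiltonian μ q₁ x p₁ p₂)
        ((1 - μ) * q₂ / r₁ ^ 3 + μ * q₂ / r₂ ^ 3) q₂ := by
      unfold eulerHamiltonian
      have := ((hasDerivAt_const q₂ ((p₁ ^ 2 + p₂ ^ 2) / 2)).sub ha).sub hb
      refine this.congr_deriv (Eq.symm ?_)
      ring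
    exact this.deriv
  -- ∂B/∂p₁
  have Bp1 : deriv (fun x => eulerIntegral μ q₁ q₂ x p₂) p₁ =
      2 * (q₁ * p₂ - q₂ * p₁) * q₂ - q₂ * p₂ := by
    have hL : HasDerivAt (fun x : ℝ => q₁ * p₂ - q₂ * x) (-q₂) p₁ := by
      simpa using ((hasDerivAt_id p₁).const_mul q₂).const_sub (q₁ * p₂)
    have : HasDerivAt (fun x => eulerIntegral μ q₁ q₂ x p₂)
        (2 * (q₁ * p₂ - q₂ * p₁) * q₂ - q₂ * p₂) p₁ := by
      unfold eulerIntegral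
      have := ((((hL.pow 2).neg.add (hL.mul_const p₂)).sub_const
        ((1 - μ) * q₁ / r₁)).sub_const (μ * (1 - q₁) / r₂))
      refine this.congr_deriv (Eq.symm ?_)
      ring
    exact this.deriv
  -- ∂B/∂p₂
  have Bp2 : deriv (fun x => eulerIntegral μ q₁ q₂ p₁ x) p₂ =
      -2 * (q₁ * p₂ - q₂ * p₁) * q₁ + q₁ * p₂ + (q₁ * p₂ - q₂ * p₁) := by
    have hL : HasDerivAt (fun x : ℝ => q₁ * x - q₂ * p₁) q₁ p₂ := by
      simpa using ((hasDerivAt_id p₂).const_mul q₁).sub_const (q₂ * p₁)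
    have : HasDerivAt (fun x => eulerIntegral μ q₁ q₂ p₁ x)
        (-2 * (q₁ * p₂ - q₂ * p₁) * q₁ + q₁ * p₂ + (q₁ * p₂ - q₂ * p₁)) p₂ := by
      unfold eulerIntegral
      have := ((((hL.pow 2).neg.add (hL.mul (hasDerivAt_id' (x := p₂)))).sub_const
        ((1 - μ) * q₁ / r₁)).sub_const (μ * (1 - q₁) / r₂))
      refine this.congr_deriv (Eq.symm ?_)
      ring
    exact this.deriv
  -- ∂B/∂q₁
  have Bq1 : deriv (fun x => eulerIntegral μ x q₂ p₁ p₂) q₁ =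
      -2 * (q₁ * p₂ - q₂ * p₁) * p₂ + p₂ ^ 2
        - (1 - μ) * q₂ ^ 2 / r₁ ^ 3 + μ * q₂ ^ 2 / r₂ ^ 3 := by
    have hL : HasDerivAt (fun x : ℝ => x * p₂ - q₂ * p₁) p₂ q₁ := by
      simpa using ((hasDerivAt_id q₁).mul_const p₂).sub_const (q₂ * p₁)
    have ha : HasDerivAt (fun t : ℝ => (1 - μ) * t / Real.sqrt (t ^ 2 + q₂ ^ 2))
        ((1 - μ) * q₂ ^ 2 / r₁ ^ 3) q₁ := by
      have heq : (fun t : ℝ => (1 - μ) * t / Real.sqrt (t ^ 2 + q₂ ^ 2))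
          = (fun t : ℝ => (1 - μ) * (t - 0) / Real.sqrt ((t - 0) ^ 2 + q₂ ^ 2)) := by
        funext t; rw [sub_zero]
      rw [heq]
      have := hda_lin_div_r (1 - μ) 0 q₂ q₁ (by simpa using h1)
      simpa [hr₁def] using this
    have hb : HasDerivAt (fun t : ℝ => μ * (1 - t) / Real.sqrt ((t - 1) ^ 2 + q₂ ^ 2))
        (-μ * q₂ ^ 2 / r₂ ^ 3) q₁ := by
      have heq : (fun t : ℝ => μ * (1 - t) / Real.sqrt ((t - 1) ^ 2 + q₂ ^ 2))
          = (fun t : ℝ => (-μ) * (t - 1) / Real.sqrt ((t - 1) ^ 2 + q₂ ^ 2)) := by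
        funext t; ring
      rw [heq]
      have := hda_lin_div_r (-μ) 1 q₂ q₁ h2
      exact this
    have : HasDerivAt (fun x => eulerIntegral μ x q₂ p₁ p₂)
        (-2 * (q₁ * p₂ - q₂ * p₁) * p₂ + p₂ ^ 2
          - (1 - μ) * q₂ ^ 2 / r₁ ^ 3 + μ * q₂ ^ 2 / r₂ ^ 3) q₁ := by
      unfold eulerIntegral
      have := (((hL.pow 2).neg.add (hL.mul_const p₂)).sub ha).sub hb
      refine this.congr_deriv (Eq.symm ?_)
      ring
    exact this.deriv
  -- ∂B/∂q₂
  have Bq2 : deriv (fun x => eulerIntegral μ q₁ x p₁ p₂) q₂ =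
      2 * (q₁ * p₂ - q₂ * p₁) * p₁ - p₁ * p₂
        + (1 - μ) * q₁ * q₂ / r₁ ^ 3 + μ * (1 - q₁) * q₂ / r₂ ^ 3 := by
    have hL : HasDerivAt (fun x : ℝ => q₁ * p₂ - x * p₁) (-p₁) q₂ := by
      simpa using ((hasDerivAt_id q₂).mul_const p₁).const_sub (q₁ * p₂)
    have ha : HasDerivAt (fun t : ℝ => (1 - μ) * q₁ / Real.sqrt (q₁ ^ 2 + t ^ 2))
        (-((1 - μ) * q₁ * q₂) / r₁ ^ 3) q₂ := by
      have := hda_c_div_r_y ((1 - μ) * q₁) q₁ q₂ h1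
      exact this
    have hb : HasDerivAt (fun t : ℝ => μ * (1 - q₁) / Real.sqrt ((q₁ - 1) ^ 2 + t ^ 2))
        (-(μ * (1 - q₁) * q₂) / r₂ ^ 3) q₂ := by
      have := hda_c_div_r_y (μ * (1 - q₁)) (q₁ - 1) q₂ h2
      exact this
    have : HasDerivAt (fun x => eulerIntegral μ q₁ x p₁ p₂)
        (2 * (q₁ * p₂ - q₂ * p₁) * p₁ - p₁ * p₂
          + (1 - μ) * q₁ * q₂ / r₁ ^ 3 + μ * (1 - q₁) * q₂ / r₂ ^ 3) q₂ := by
      unfold eulerIntegral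
      have := (((hL.pow 2).neg.add (hL.mul_const p₂)).sub ha).sub hb
      refine this.congr_deriv (Eq.symm ?_)
      ring
    exact this.deriv
  unfold poissonBracket
  rw [Hp1, Hp2, Hq1, Hq2, Bp1, Bp2, Bq1, Bq2]
  field_simp
  ring
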